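/- arXiv:0908.1551 — 4 statements merged into one kernel-verified Lean document; each statement's English description precedes it below -/
import Mathlib

section
/- Let d₀, d₁, d₂ be real numbers with d₁ > 0, 2d₁ ≤ d₀ and 0 < d₂ ≤ d₁²/(8 d₀). Then 0 ≤ d₀ − 2d₂ − √((d₀ + 2d₂)² − d₁²) ≤ d₁/2. -/
theorem sqrt_param_ineq
    (d₀ d₁ d₂ : ℝ) (hd₁ : 0 < d₁) (hd₁d₀ : 2 * d₁ ≤ d₀)
    (hd₂ : 0 < d₂) (hd₂' : d₂ ≤ d₁ ^ 2 / (8 * d₀)) :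
    0 ≤ d₀ - 2 * d₂ - Real.sqrt ((d₀ + 2 * d₂) ^ 2 - d₁ ^ 2) ∧
      d₀ - 2 * d₂ - Real.sqrt ((d₀ + 2 * d₂) ^ 2 - d₁ ^ 2) ≤ d₁ / 2 := by
  have hd₀ : 0 < d₀ := by linarith
  have hkey : 8 * d₀ * d₂ ≤ d₁ ^ 2 := by
    rw [le_div_iff₀ (by positivity)] at hd₂'
    linarith
  have hsub : 2 * d₂ < d₀ := by nlinarith
  constructor
  · have h1 : Real.sqrt ((d₀ + 2 * d₂) ^ 2 - d₁ ^ 2) ≤ d₀ - 2 * d₂ := by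
      rw [show d₀ - 2 * d₂ = Real.sqrt ((d₀ - 2 * d₂) ^ 2) from
        (Real.sqrt_sq (by linarith)).symm]
      apply Real.sqrt_le_sqrt
      nlinarith
    linarith
  · rcases le_or_gt (d₀ - 2 * d₂) (d₁ / 2) with h | h
    · have := Real.sqrt_nonneg ((d₀ + 2 * d₂) ^ 2 - d₁ ^ 2)
      linarith
    · have h2 : d₀ - 2 * d₂ - d₁ / 2 ≤ Real.sqrt ((d₀ + 2 * d₂) ^ 2 - d₁ ^ 2) := by
        rw [Real.le_sqrt' (by linarith)]
        nlinarith
      linarith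
end

section
/- Let E be a real inner product space, r ≥ 0, and let K be a nonempty subset of E contained in both closed balls B(m₁, r) and B(m₂, r). Then ‖m₁ − m₂‖ ≤ 2r and K is contained in the closed ball with center (m₁ + m₂)/2 and radius √(r² − ‖m₁ − m₂‖²/4). -/
theorem midpoint_enclosing_ball
    {E : Type*} [NormedAddCommGroup E] [InnerProductSpace ℝ E]
    (r : ℝ) (hr : 0 ≤ r) (K : Set E) (hK : K.Nonempty)
    (m₁ m₂ : E)
    (h₁ : K ⊆ Metric.closedBall m₁ r) (h₂ : K ⊆ Metric.closedBall m₂ r) :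
    ‖m₁ - m₂‖ ≤ 2 * r ∧
      K ⊆ Metric.closedBall ((1 / 2 : ℝ) • (m₁ + m₂))
        (Real.sqrt (r ^ 2 - ‖m₁ - m₂‖ ^ 2 / 4)) := by
  obtain ⟨x₀, hx₀⟩ := hK
  have d₁ : ‖x₀ - m₁‖ ≤ r := by
    have := h₁ hx₀; rwa [Metric.mem_closedBall, dist_eq_norm] at this
  have d₂ : ‖x₀ - m₂‖ ≤ r := by
    have := h₂ hx₀; rwa [Metric.mem_closedBall, dist_eq_norm] at this
  have hbound : ‖m₁ - m₂‖ ≤ 2 * r := by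
    have : m₁ - m₂ = (x₀ - m₂) - (x₀ - m₁) := by abel
    rw [this]
    calc ‖(x₀ - m₂) - (x₀ - m₁)‖ ≤ ‖x₀ - m₂‖ + ‖x₀ - m₁‖ := norm_sub_le _ _
      _ ≤ 2 * r := by linarith
  refine ⟨hbound, fun x hx => ?_⟩
  have e₁ : ‖x - m₁‖ ≤ r := by
    have := h₁ hx; rwa [Metric.mem_closedBall, dist_eq_norm] at this
  have e₂ : ‖x - m₂‖ ≤ r := by
    have := h₂ hx; rwa [Metric.mem_closedBall, dist_eq_norm] at this
  rw [Metric.mem_closedBall, dist_eq_norm]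
  rw [Real.le_sqrt (norm_nonneg _)]
  have hpar := parallelogram_law_with_norm ℝ (x - m₁) (x - m₂)
  have hsub : (x - m₁) - (x - m₂) = m₂ - m₁ := by abel
  rw [hsub, norm_sub_rev] at hpar
  have hc : x - (1 / 2 : ℝ) • (m₁ + m₂) = (1 / 2 : ℝ) • ((x - m₁) + (x - m₂)) := by
    module
  rw [hc, norm_smul]
  have h12 : ‖(1 / 2 : ℝ)‖ = 1 / 2 := by norm_num [Real.norm_eq_abs]
  rw [h12]
  have hn1 : 0 ≤ ‖x - m₁‖ := norm_nonneg _
  have hn2 : 0 ≤ ‖x - m₂‖ := norm_nonneg _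
  nlinarith [sq_nonneg (‖x - m₁‖ - ‖x - m₂‖)]
  nlinarith [norm_nonneg (m₁ - m₂)]
end

section
/- Let K be a nonempty compact subset of Euclidean space ℝ^d and suppose the closed ball B(m,r) is a minimal enclosing ball of K, i.e. K ⊆ B(m,r) and every closed ball containing K has radius ≥ r. Then the intersection of K with the sphere ∂B(m,r) = {x : ‖x − m‖ = r} is nonempty, and every closed ball containing K ∩ ∂B(m,r) has radius ≥ r; that is, B(m,r) is also a minimal enclosing ball of K ∩ ∂B(m,r). -/
open Metric Real

lemma meb_key_identity {E : Type*} [NormedAddCommGroup E] [InnerProductSpace ℝ E]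
    (x m m' : E) (t : ℝ) :
    dist x (m + t • (m' - m)) ^ 2
      = (1 - t) * dist x m ^ 2 + t * dist x m' ^ 2 - t * (1 - t) * dist m m' ^ 2 := by
  simp only [dist_eq_norm]
  have h1 : x - (m + t • (m' - m)) = (x - m) - t • (m' - m) := by module
  have h2 : x - m' = (x - m) - (m' - m) := by module
  have h3 : m - m' = -(m' - m) := by module
  rw [h1, h2, h3, norm_neg]
  set u := x - m
  set v := m' - m
  have e1 : ‖u - t • v‖ ^ 2 = ‖u‖ ^ 2 - 2 * inner ℝ u (t • v) + ‖t • v‖ ^ 2 :=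
    norm_sub_sq_real u (t • v)
  have e2 : ‖u - v‖ ^ 2 = ‖u‖ ^ 2 - 2 * inner ℝ u v + ‖v‖ ^ 2 := norm_sub_sq_real u v
  have e3 : (inner ℝ u (t • v) : ℝ) = t * inner ℝ u v := real_inner_smul_right u v t
  have e4 : ‖t • v‖ ^ 2 = t ^ 2 * ‖v‖ ^ 2 := by
    rw [norm_smul, mul_pow, Real.norm_eq_abs, sq_abs]
  rw [e1, e2, e3, e4]; ring

lemma meb_aux_ineq (dm dm' c r s t : ℝ) (h0 : 0 ≤ dm) (h1 : dm ≤ r) (h2 : dm' ^ 2 ≤ s)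
    (ht0 : 0 ≤ t) (ht1 : t ≤ 1) :
    (1 - t) * dm ^ 2 + t * dm' ^ 2 - t * (1 - t) * c ^ 2 ≤ r ^ 2 + t * (s - r ^ 2) := by
  nlinarith [mul_nonneg (by linarith : (0:ℝ) ≤ 1 - t) (by nlinarith : (0:ℝ) ≤ r ^ 2 - dm ^ 2),
    mul_nonneg ht0 (by linarith : (0:ℝ) ≤ s - dm' ^ 2),
    mul_nonneg (mul_nonneg ht0 (by linarith : (0:ℝ) ≤ 1 - t)) (sq_nonneg c)]

theorem meb_of_sphere_intersection
    (d : ℕ) (K : Set (EuclideanSpace ℝ (Fin d)))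
    (hK : K.Nonempty) (hKc : IsCompact K)
    (m : EuclideanSpace ℝ (Fin d)) (r : ℝ)
    (hsub : K ⊆ Metric.closedBall m r)
    (hmin : ∀ (m' : EuclideanSpace ℝ (Fin d)) (r' : ℝ),
      K ⊆ Metric.closedBall m' r' → r ≤ r') :
    (K ∩ Metric.sphere m r).Nonempty ∧
      ∀ (m' : EuclideanSpace ℝ (Fin d)) (r' : ℝ),
        K ∩ Metric.sphere m r ⊆ Metric.closedBall m' r' → r ≤ r' := by
  -- farthest point of K from m lies on the sphere
  obtain ⟨x₀, hx₀K, hx₀max⟩ :=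
    hKc.exists_isMaxOn hK ((continuous_id.dist continuous_const).continuousOn)
  have hx₀le : dist x₀ m ≤ r := hsub hx₀K
  have hrle : r ≤ dist x₀ m := by
    apply hmin m (dist x₀ m)
    intro x hx
    exact mem_closedBall.2 (hx₀max hx)
  have hx₀sph : x₀ ∈ Metric.sphere m r :=
    Metric.mem_sphere.2 (le_antisymm hx₀le hrle)
  refine ⟨⟨x₀, hx₀K, hx₀sph⟩, ?_⟩
  intro m' r' hS
  by_contra hcon
  push_neg at hcon
  have hx₀S : x₀ ∈ K ∩ Metric.sphere m r := ⟨hx₀K, hx₀sph⟩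
  have hr'0 : 0 ≤ r' := dist_nonneg.trans (mem_closedBall.1 (hS hx₀S))
  have hr0 : 0 ≤ r := hr'0.trans hcon.le
  -- case m' = m : immediate contradiction
  by_cases hmm : m' = m
  · subst hmm
    have : dist x₀ m' ≤ r' := mem_closedBall.1 (hS hx₀S)
    rw [Metric.mem_sphere.1 hx₀sph] at this
    exact absurd this (not_le.2 hcon)
  have hc : 0 < dist m m' := dist_pos.2 (fun h => hmm h.symm)
  set c := dist m m' with hcdef
  set s : ℝ := (r' ^ 2 + r ^ 2) / 2 with hsdef
  have hsr : s < r ^ 2 := by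
    have : r' ^ 2 < r ^ 2 := by nlinarith
    simp only [hsdef]; nlinarith
  have hr's : r' ^ 2 < s := by simp only [hsdef]; nlinarith
  -- bound on the "far from m'" part of K
  obtain ⟨ρ, hρr, hρbound⟩ :
      ∃ ρ : ℝ, ρ < r ∧ ∀ x ∈ K, s ≤ dist x m' ^ 2 → dist x m ≤ ρ := by
    set Ka : Set (EuclideanSpace ℝ (Fin d)) := K ∩ {x | s ≤ dist x m' ^ 2} with hKa
    have hKaC : IsCompact Ka := by
      apply hKc.inter_right
      have : Continuous fun x : EuclideanSpace ℝ (Fin d) => dist x m' ^ 2 :=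
        (continuous_id.dist continuous_const).pow 2
      exact isClosed_le continuous_const this
    rcases Set.eq_empty_or_nonempty Ka with hE | hNE
    · refine ⟨0, by linarith, fun x hx hx' => absurd ?_ (Set.eq_empty_iff_forall_notMem.1 hE x)⟩
      exact ⟨hx, hx'⟩
    · obtain ⟨x₁, hx₁Ka, hx₁max⟩ :=
        hKaC.exists_isMaxOn hNE ((continuous_id.dist continuous_const).continuousOn)
      refine ⟨dist x₁ m, ?_, fun x hx hx' => hx₁max (⟨hx, hx'⟩ : x ∈ Ka)⟩
      have h1 : dist x₁ m ≤ r := hsub hx₁Ka.1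
      rcases lt_or_eq_of_le h1 with h | h
      · exact h
      · exfalso
        have hsph : x₁ ∈ Metric.sphere m r := by exact Metric.mem_sphere.2 h
        have : dist x₁ m' ≤ r' := mem_closedBall.1 (hS ⟨hx₁Ka.1, hsph⟩)
        have h2 : dist x₁ m' ^ 2 ≤ r' ^ 2 := by nlinarith [dist_nonneg (x := x₁) (y := m')]
        have h3 := hx₁Ka.2
        simp only [Set.mem_setOf_eq] at h3
        nlinarith
  -- choose a small shift
  set t : ℝ := min (1/2) ((r - ρ) / (2 * c)) with htdef
  have ht0 : 0 < t := by
    apply lt_min (by norm_num)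
    exact div_pos (by linarith) (by linarith)
  have ht1 : t < 1 := lt_of_le_of_lt (min_le_left _ _) (by norm_num)
  have htc : t * c ≤ (r - ρ) / 2 := by
    have h := min_le_right (1/2) ((r - ρ) / (2 * c))
    calc t * c ≤ ((r - ρ) / (2 * c)) * c := by
          apply mul_le_mul_of_nonneg_right h hc.le
      _ = (r - ρ) / 2 := by field_simp
  set p : EuclideanSpace ℝ (Fin d) := m + t • (m' - m) with hpdef
  set R : ℝ := max (Real.sqrt (r ^ 2 + t * (s - r ^ 2))) ((r + ρ) / 2) with hRdef
  have hRr : R < r := by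
    apply max_lt
    · have hnn : (0:ℝ) ≤ r ^ 2 + t * (s - r ^ 2) := by nlinarith
      have : Real.sqrt (r ^ 2 + t * (s - r ^ 2)) < Real.sqrt (r ^ 2) := by
        apply Real.sqrt_lt_sqrt hnn
        nlinarith
      rwa [Real.sqrt_sq hr0] at this
    · linarith
  have hsubR : K ⊆ Metric.closedBall p R := by
    intro x hx
    rw [mem_closedBall]
    by_cases hfar : s ≤ dist x m' ^ 2
    · -- far from m' : close to m, so small shift is fine
      have h1 : dist x m ≤ ρ := hρbound x hx hfar
      have h2 : dist m p = t * c := by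
        rw [hpdef, dist_eq_norm]
        have : m - (m + t • (m' - m)) = (-t) • (m' - m) := by module
        rw [this, norm_smul, Real.norm_eq_abs, abs_neg, abs_of_pos ht0,
          hcdef, dist_eq_norm]
        congr 1
        rw [← norm_neg]; congr 1; module
      calc dist x p ≤ dist x m + dist m p := dist_triangle x m p
        _ = dist x m + t * c := by rw [h2]
        _ ≤ ρ + (r - ρ) / 2 := by linarith
        _ = (r + ρ) / 2 := by ring
        _ ≤ R := le_max_right _ _
    · push_neg at hfar
      have hid := meb_key_identity x m m' t
      have h1 : dist x m ≤ r := hsub hx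
      have h2 : dist x p ^ 2 ≤ r ^ 2 + t * (s - r ^ 2) := by
        rw [hpdef, hid]
        exact meb_aux_ineq _ _ _ _ _ _ dist_nonneg h1 hfar.le ht0.le ht1.le
      have h3 : dist x p ≤ Real.sqrt (r ^ 2 + t * (s - r ^ 2)) := by
        have := Real.sqrt_le_sqrt h2
        rwa [Real.sqrt_sq dist_nonneg] at this
      exact h3.trans (le_max_left _ _)
  exact absurd (hmin p R hsubR) (not_le.2 hRr)
end

section
/- Let C be a nonempty compact, path-connected subset of ℝ^d, let c₀ ∈ C, and let δ, d₀ be real numbers with 0 < 2δ < d₀. Then there exist finitely many points c₁, …, c_n ∈ C such that ‖c_{i−1} − c_i‖ ≤ d₀ − 2δ for every 1 ≤ i ≤ n, and the closed (d₀ − 2δ)-neighborhood C_{+(d₀−2δ)} = {x ∈ ℝ^d : dist(x, C) ≤ d₀ − 2δ} is contained in the union of the open balls of radius d₀ − δ centered at c₀, c₁, …, c_n. -/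
open Metric Set

lemma exists_path_through {E : Type*} [TopologicalSpace E] {C : Set E}
    (h : IsPathConnected C) :
    ∀ (l : List E), (∀ p ∈ l, p ∈ C) → ∀ (a : E), a ∈ C →
      ∃ b, b ∈ C ∧ ∃ γ : Path a b, (∀ t, γ t ∈ C) ∧ ∀ p ∈ l, ∃ t, γ t = p := by
  intro l
  induction l with
  | nil =>
    intro _ a ha
    exact ⟨a, ha, Path.refl a, fun _ => ha, fun p hp => by simp at hp⟩
  | cons p l ih =>
    intro hl a ha
    have hp : p ∈ C := hl p List.mem_cons_self
    obtain ⟨γ₁, hγ₁⟩ := (h.joinedIn a ha p hp)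
    obtain ⟨b, hb, γ₂, hγ₂, hvisit⟩ := ih (fun q hq => hl q (List.mem_cons_of_mem _ hq)) p hp
    refine ⟨b, hb, γ₁.trans γ₂, ?_, ?_⟩
    · intro t
      have h2 : (γ₁.trans γ₂) t ∈ range γ₁ ∪ range γ₂ := by
        rw [← Path.trans_range]; exact mem_range_self t
      rcases h2 with ⟨s, hs⟩ | ⟨s, hs⟩
      · rw [← hs]; exact hγ₁ s
      · rw [← hs]; exact hγ₂ s
    · intro q hq
      rcases List.mem_cons.mp hq with rfl | hq
      · have : q ∈ range (γ₁.trans γ₂) := by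
          rw [Path.trans_range]; exact Or.inl ⟨1, γ₁.target⟩
        exact this
      · obtain ⟨t, ht⟩ := hvisit q hq
        have : q ∈ range (γ₁.trans γ₂) := by
          rw [Path.trans_range]; exact Or.inr ⟨t, ht⟩
        exact this

theorem chain_cover_of_compact_pathConnected
    (d : ℕ) (C : Set (EuclideanSpace ℝ (Fin d)))
    (hCc : IsCompact C) (hCp : IsPathConnected C)
    (c₀ : EuclideanSpace ℝ (Fin d)) (hc₀ : c₀ ∈ C)
    (δ d₀ : ℝ) (hδ : 0 < δ) (hδd₀ : 2 * δ < d₀) :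
    ∃ (n : ℕ) (c : ℕ → EuclideanSpace ℝ (Fin d)),
      c 0 = c₀ ∧
      (∀ i, i ≤ n → c i ∈ C) ∧
      (∀ i, 1 ≤ i → i ≤ n → ‖c (i - 1) - c i‖ ≤ d₀ - 2 * δ) ∧
      {x : EuclideanSpace ℝ (Fin d) | Metric.infDist x C ≤ d₀ - 2 * δ} ⊆
        ⋃ i ∈ Finset.range (n + 1), Metric.ball (c i) (d₀ - δ) := by
  set ε := d₀ - 2 * δ with hε
  have hεpos : 0 < ε := by linarith
  set η := min ε (δ / 3) with hη
  have hηpos : 0 < η := lt_min hεpos (by linarith)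
  have hηε : η ≤ ε := min_le_left _ _
  have hηδ : η ≤ δ / 3 := min_le_right _ _
  -- finite δ/3-net of C
  obtain ⟨s, hsC, hsfin, hcover⟩ :=
    hCc.elim_finite_subcover_image (fun c (_ : c ∈ C) => isOpen_ball (x := c) (ε := δ / 3))
      (fun x hx => mem_biUnion hx (mem_ball_self (by linarith : (0:ℝ) < δ / 3)))
  -- path through the net
  obtain ⟨b, hb, γ, hγC, hvisit⟩ :=
    exists_path_through hCp hsfin.toFinset.toList
      (fun p hp => hsC (by simpa using hp)) c₀ hc₀
  -- uniform continuity
  have hγu : UniformContinuous γ := CompactSpace.uniformContinuous_of_continuous γ.continuous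
  obtain ⟨ρ, hρpos, hρ⟩ := Metric.uniformContinuous_iff.mp hγu η hηpos
  obtain ⟨m, hm⟩ := exists_nat_one_div_lt hρpos
  set M : ℝ := (m : ℝ) + 1 with hM
  have hMpos : (0:ℝ) < M := by positivity
  have hstep : (1 : ℝ) / M < ρ := hm
  set u : ℕ → unitInterval := fun i => Set.projIcc 0 1 zero_le_one ((i : ℝ) / M) with hu
  set c : ℕ → EuclideanSpace ℝ (Fin d) := fun i => γ (u i) with hc
  have hdist_u : ∀ (x y : ℝ),
      dist (Set.projIcc 0 1 zero_le_one x) (Set.projIcc 0 1 zero_le_one y) ≤ dist x y := by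
    intro x y
    simpa using (LipschitzWith.projIcc (zero_le_one' ℝ)).dist_le_mul x y
  refine ⟨m + 1, c, ?_, fun i _ => hγC (u i), ?_, ?_⟩
  · have h0 : u 0 = 0 := by
      simp only [hu, Nat.cast_zero, zero_div]
      rw [Set.projIcc_left]
      rfl
    show γ (u 0) = c₀
    rw [h0]
    exact γ.source
  · -- chain steps
    intro i hi1 him
    have hcast : ((i - 1 : ℕ) : ℝ) = (i : ℝ) - 1 := by
      have : (1 : ℕ) ≤ i := hi1
      push_cast [this]
      ring
    have hdu : dist (u (i - 1)) (u i) < ρ := by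
      calc dist (u (i-1)) (u i) ≤ dist (((i-1 : ℕ) : ℝ) / M) ((i : ℝ) / M) := hdist_u _ _
        _ = 1 / M := by
            rw [Real.dist_eq, hcast]
            have heq : ((i:ℝ) - 1) / M - (i:ℝ) / M = -(1 / M) := by ring
            rw [heq, abs_neg, abs_of_pos (by positivity)]
        _ < ρ := hstep
    have := hρ hdu
    have hle : dist (c (i-1)) (c i) ≤ ε := le_trans (le_of_lt this) hηε
    rwa [dist_eq_norm] at hle
  · -- coverage
    intro x hx
    simp only [mem_setOf_eq] at hx
    obtain ⟨y, hyC, hyd⟩ := hCc.exists_infDist_eq_dist ⟨c₀, hc₀⟩ x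
    have hy : y ∈ ⋃ p ∈ s, ball p (δ / 3) := hcover hyC
    obtain ⟨p, hps, hyp⟩ := mem_iUnion₂.mp hy
    obtain ⟨t, htp⟩ := hvisit p (by simp [hsfin.mem_toFinset]; exact hps)
    -- pick i near t
    set i : ℕ := ⌊(t : ℝ) * M⌋₊ with hi
    have ht0 : (0:ℝ) ≤ (t : ℝ) := t.2.1
    have ht1 : (t : ℝ) ≤ 1 := t.2.2
    have hiub : i ≤ m + 1 := by
      have h1 : (t : ℝ) * M ≤ M := by nlinarith
      have : (i : ℝ) ≤ M := le_trans (Nat.floor_le (by positivity)) h1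
      have : (i : ℝ) ≤ ((m : ℕ) : ℝ) + 1 := this
      exact_mod_cast this
    have hclose : dist (u i) t < ρ := by
      have htmem : (t : ℝ) ∈ Icc (0:ℝ) 1 := t.2
      have hproj : Set.projIcc 0 1 zero_le_one ((t : ℝ)) = t := by
        rw [Set.projIcc_of_mem zero_le_one htmem]
      calc dist (u i) t = dist (Set.projIcc 0 1 zero_le_one ((i : ℝ) / M))
            (Set.projIcc 0 1 zero_le_one ((t : ℝ))) := by rw [hproj]
        _ ≤ dist ((i : ℝ) / M) ((t : ℝ)) := hdist_u _ _
        _ < ρ := by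
            rw [Real.dist_eq]
            have hfl : (i : ℝ) ≤ (t : ℝ) * M := Nat.floor_le (by positivity)
            have hfu : (t : ℝ) * M < (i : ℝ) + 1 := Nat.lt_floor_add_one _
            rw [abs_of_nonpos (by
              have : (i : ℝ) / M ≤ (t : ℝ) := by
                rw [div_le_iff₀ hMpos]; nlinarith
              linarith)]
            have : (t : ℝ) - (i : ℝ) / M < 1 / M := by
              rw [lt_div_iff₀ hMpos, sub_mul, div_mul_cancel₀ _ (ne_of_gt hMpos)]
              linarith
            linarith
    have hcp : dist (c i) p < δ / 3 := by
      have := hρ hclose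
      rw [htp] at this
      exact lt_of_lt_of_le this hηδ
    have hxc : dist x (c i) < d₀ - δ := by
      have h1 : dist x y ≤ ε := by rw [← hyd]; exact hx
      have h2 : dist y p < δ / 3 := mem_ball.mp hyp
      calc dist x (c i) ≤ dist x y + dist y p + dist p (c i) := dist_triangle4 x y p (c i)
        _ < ε + δ / 3 + δ / 3 := by
            rw [dist_comm p (c i)]; exact add_lt_add_of_lt_of_lt (add_lt_add_of_le_of_lt h1 h2) hcp
        _ < d₀ - δ := by rw [hε]; linarith
    exact mem_iUnion₂.mpr ⟨i, Finset.mem_range.mpr (Nat.lt_succ_of_le hiub), mem_ball.mpr hxc⟩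
end
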